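/- Let (X, r) be a simple involutive non-degenerate set-theoretic solution of the Yang–Baxter equation. If |X| > 2, then (X, r) is indecomposable; and if |X| is not a prime number, then (X, r) is irretractable. -/

import Mathlib

open Equiv Pointwise

universe u v

/-- An involutive non-degenerate set-theoretic solution of the Yang–Baxter equation on `X`,
presented by its family of bijections `σ x` (`x ∈ X`), subject to the condition
`σ_x ∘ σ_{σ_x⁻¹(y)} = σ_y ∘ σ_{σ_y⁻¹(x)}`; the solution itself is recovered as
`r (x, y) = (σ x y, (σ (σ x y))⁻¹ x)`. -/
structure YBE (X : Type u) where
  σ : X → Equiv.Perm X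
  ybe : ∀ x y : X, σ x * σ ((σ x)⁻¹ y) = σ y * σ ((σ y)⁻¹ x)

namespace YBE

variable {X : Type u} {Y : Type v}

/-- The permutation group `𝒢(X,r)` of a solution. -/
def permGroup (S : YBE X) : Subgroup (Equiv.Perm X) :=
  Subgroup.closure (Set.range S.σ)

/-- `(X,r)` is indecomposable if `𝒢(X,r)` acts transitively on `X`. -/
def Indecomposable (S : YBE X) : Prop :=
  ∀ x y : X, ∃ g ∈ S.permGroup, g x = y

/-- Homomorphism of solutions. -/
def IsHom (S : YBE X) (T : YBE Y) (f : X → Y) : Prop :=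
  ∀ x y : X, f (S.σ x y) = T.σ (f x) (f y)

/-- `T` is (a copy of) the retract `Ret(X,r)` of `S`: there is a surjective homomorphism
of solutions identifying points with equal `σ`'s, and only those. -/
def IsRetract (S : YBE X) (T : YBE Y) : Prop :=
  ∃ f : X → Y, Function.Surjective f ∧ S.IsHom T f ∧
    ∀ x x' : X, f x = f x' ↔ S.σ x = S.σ x'

/-- `Retⁿ(X,r)` has cardinality one, i.e. the multipermutation level is at most `n`. -/
def MPLevelLE : ℕ → (X : Type u) → YBE X → Prop
  | 0, X, _ => Nonempty X ∧ Subsingleton X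
  | n + 1, _, S => ∃ (Z : Type u) (T : YBE Z), S.IsRetract T ∧ MPLevelLE n Z T

/-- `(X,r)` is a multipermutation solution: `Retⁿ(X,r)` has cardinality one
for some positive integer `n`. -/
def IsMultipermutation (S : YBE X) : Prop :=
  ∃ n : ℕ, 0 < n ∧ MPLevelLE n X S

/-- `m` is the multipermutation level of `(X,r)`: it is the least positive integer
with `|Retᵐ(X,r)| = 1`. -/
def MPLevelExact (S : YBE X) (m : ℕ) : Prop :=
  0 < m ∧ MPLevelLE m X S ∧ ∀ k : ℕ, 0 < k → MPLevelLE k X S → m ≤ k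

/-- A simple solution: `|X| > 1` and every epimorphic image is either an isomorphic copy
or a singleton. -/
def IsSimple (S : YBE X) : Prop :=
  1 < Nat.card X ∧ ∀ (Z : Type u) (T : YBE Z) (f : X → Z),
    S.IsHom T f → Function.Surjective f → (Function.Bijective f ∨ Nat.card Z = 1)

end YBE

/-- The orbit `H(x) = {t(x) : t ∈ H}` of `x ∈ X` under a subgroup `H` of a permutation
group `G ≤ Sym(X)`. -/
def orbIn {X : Type u} {G : Subgroup (Equiv.Perm X)} (H : Subgroup ↥G) (x : X) : Set X :=
  {y | ∃ t : ↥G, t ∈ H ∧ (t : Equiv.Perm X) x = y}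

/-- The "orbit" `A(x) = {t(x) : t ∈ A}` of `x ∈ X` under a subset `A` of a permutation
group `G ≤ Sym(X)`. -/
def orbSet {X : Type u} {G : Subgroup (Equiv.Perm X)} (A : Set ↥G) (x : X) : Set X :=
  {y | ∃ t ∈ A, ((t : Equiv.Perm X)) x = y}

/-- A left-brace structure on a group `G`: an abelian group operation `add` (whose neutral
element is `1`) satisfying the brace compatibility `a∘(b+c) + a = a∘b + a∘c`, where `∘` is the
given group operation of `G`.  In other words, this makes `G` a left brace whose
multiplicative group is `G`. -/
structure BraceOps (G : Type*) [Group G] where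
  add : G → G → G
  neg : G → G
  add_assoc : ∀ a b c, add (add a b) c = add a (add b c)
  add_comm : ∀ a b, add a b = add b a
  zero_add : ∀ a, add 1 a = a
  neg_add_cancel : ∀ a, add (neg a) a = 1
  compat : ∀ a b c, add (a * add b c) a = add (a * b) (a * c)

namespace BraceOps

variable {G : Type*} [Group G]

/-- The lambda map `λ_a(b) = -a + a∘b` of a left brace. -/
def lam (β : BraceOps G) (a b : G) : G :=
  β.add (β.neg a) (a * b)

/-- Natural multiples with respect to the additive structure of the brace. -/
def nsmul (β : BraceOps G) : ℕ → G → G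
  | 0, _ => 1
  | n + 1, a => β.add a (β.nsmul n a)

/-- The socle `Soc(B) = {a : a∘b = a + b for all b}` of a left brace. -/
def socle (β : BraceOps G) : Set G :=
  {a | ∀ b : G, a * b = β.add a b}

/-- The Sylow `q`-subgroup (i.e. the `q`-primary component) of the additive group of a
finite left brace. -/
def addSylow (β : BraceOps G) (q : ℕ) : Set G :=
  {a | ∃ k : ℕ, β.nsmul (q ^ k) a = 1}

/-- `A` is a subgroup of the additive group of the brace. -/
def IsAddSubgroup (β : BraceOps G) (A : Set G) : Prop :=
  1 ∈ A ∧ (∀ a ∈ A, ∀ b ∈ A, β.add a b ∈ A) ∧ ∀ a ∈ A, β.neg a ∈ A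

/-- A left ideal of a left brace: an additive subgroup stable under all `λ_a`. -/
def IsLeftIdeal (β : BraceOps G) (L : Set G) : Prop :=
  β.IsAddSubgroup L ∧ ∀ a : G, ∀ b ∈ L, β.lam a b ∈ L

/-- An ideal of a left brace: a normal subgroup of the multiplicative group stable
under all `λ_a`. -/
def IsIdeal (β : BraceOps G) (I : Set G) : Prop :=
  1 ∈ I ∧ (∀ a ∈ I, ∀ b ∈ I, a * b ∈ I) ∧ (∀ a ∈ I, a⁻¹ ∈ I) ∧
    (∀ g : G, ∀ a ∈ I, g * a * g⁻¹ ∈ I) ∧ ∀ g : G, ∀ a ∈ I, β.lam g a ∈ I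

end BraceOps

namespace YBE

variable {X : Type u}

/-- `σ x` as an element of `𝒢(X,r)`. -/
def σg (S : YBE X) (x : X) : ↥S.permGroup :=
  ⟨S.σ x, Subgroup.subset_closure (Set.mem_range_self x)⟩

/-- The natural left-brace structure on `𝒢(X,r)`: the unique left brace structure whose
multiplicative group is `𝒢(X,r)`, whose additive group is generated by `{σ_x : x ∈ X}`,
and whose lambda map satisfies `λ_g(σ_y) = σ_{g(y)}`. -/
structure IsNaturalBrace (S : YBE X) (β : BraceOps ↥S.permGroup) : Prop where
  lam_sigma : ∀ (g : ↥S.permGroup) (y : X),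
    β.lam g (S.σg y) = S.σg ((g : Equiv.Perm X) y)
  add_gen : ∀ A : Set ↥S.permGroup, β.IsAddSubgroup A → (∀ x : X, S.σg x ∈ A) →
    ∀ g : ↥S.permGroup, g ∈ A

/-- The product `P_{τ(1)} P_{τ(2)} ⋯ P_{τ(i)}` of Sylow subgroups of the additive group of
the left brace `𝒢(X,r)`, taken inside the multiplicative group. -/
def sylProdTake (S : YBE X) (β : BraceOps ↥S.permGroup) {n : ℕ} (p : Fin n → ℕ)
    (τ : Equiv.Perm (Fin n)) (i : ℕ) : Set ↥S.permGroup :=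
  ((List.ofFn fun j : Fin n => β.addSylow (p (τ j))).take i).prod

/-- The product `P_{i+1} P_{i+2} ⋯ P_n` of Sylow subgroups of the additive group of the
left brace `𝒢(X,r)`, taken inside the multiplicative group. -/
def sylProdDrop (S : YBE X) (β : BraceOps ↥S.permGroup) {n : ℕ} (p : Fin n → ℕ)
    (i : ℕ) : Set ↥S.permGroup :=
  ((List.ofFn fun j : Fin n => β.addSylow (p j)).drop i).prod

end YBE

/-- The holomorph `ℤ/(q) ⋊ Aut(ℤ/(q))` of the cyclic group of order `q`. -/
abbrev Hol (q : ℕ) :=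
  SemidirectProduct (Multiplicative (ZMod q)) (MulAut (Multiplicative (ZMod q)))
    (MonoidHom.id (MulAut (Multiplicative (ZMod q))))

/-- Kronecker delta `δ_{u,w} ∈ ℤ/(q)`. -/
noncomputable def kdelta (q : ℕ) {α : Type v} (u w : α) : ZMod q :=
  letI := Classical.propDecidable (u = w)
  if u = w then 1 else 0

/-- The map `σ'_{(a,x)}(b,y) = (b + δ_{x,σ_x(y)}, σ_x(y))` on `ℤ/(q) × Y`. -/
noncomputable def extMap {Y : Type v} (T : YBE Y) (q : ℕ) (a b : ZMod q × Y) :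
    ZMod q × Y :=
  (b.1 + kdelta q a.2 (T.σ a.2 b.2), T.σ a.2 b.2)


namespace YBE

variable {X : Type u}

private lemma lemA (S : YBE X) {a b : X} (h : S.σ a = S.σ b) (m : X) :
    S.σ ((S.σ m)⁻¹ a) = S.σ ((S.σ m)⁻¹ b) := by
  have h1 := S.ybe a m
  have h2 := S.ybe b m
  rw [h] at h1
  rw [h1] at h2
  exact mul_left_cancel h2

private lemma lemA_iter (S : YBE X) {a b : X} (h : S.σ a = S.σ b) (m : X) (j : ℕ) :
    S.σ (((S.σ m)⁻¹ ^ j) a) = S.σ (((S.σ m)⁻¹ ^ j) b) := by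
  induction j with
  | zero => simpa using h
  | succ n ih =>
      rw [pow_succ']
      simp only [Equiv.Perm.mul_apply]
      exact S.lemA ih m

private lemma lemB (S : YBE X) [Finite X] {a b : X} (h : S.σ a = S.σ b) (m : X) :
    S.σ (S.σ m a) = S.σ (S.σ m b) := by
  have hd : 0 < orderOf (S.σ m) := orderOf_pos _
  have key : (S.σ m)⁻¹ ^ (orderOf (S.σ m) - 1) = S.σ m := by
    rw [inv_pow, inv_eq_iff_mul_eq_one, ← pow_succ, Nat.sub_add_cancel hd,
      pow_orderOf_eq_one]
  have h2 := S.lemA_iter h m (orderOf (S.σ m) - 1)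
  rwa [key] at h2

/-- The retract setoid. -/
def retSetoid (S : YBE X) : Setoid X :=
  ⟨fun a b => S.σ a = S.σ b, ⟨fun _ => rfl, Eq.symm, Eq.trans⟩⟩

/-- The permutation on the retract induced by `σ x`. -/
def retPerm (S : YBE X) [Finite X] (x : X) : Equiv.Perm (Quotient S.retSetoid) where
  toFun := Quotient.map (S.σ x) fun _ _ h => S.lemB h x
  invFun := Quotient.map (⇑((S.σ x)⁻¹)) fun _ _ h => S.lemA h x
  left_inv := fun q => Quotient.inductionOn q fun z => by
    show Quotient.mk _ ((S.σ x)⁻¹ (S.σ x z)) = Quotient.mk _ z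
    rw [Equiv.Perm.inv_def, Equiv.symm_apply_apply]
  right_inv := fun q => Quotient.inductionOn q fun z => by
    show Quotient.mk _ (S.σ x ((S.σ x)⁻¹ z)) = Quotient.mk _ z
    rw [Equiv.Perm.inv_def, Equiv.apply_symm_apply]

/-- The retract solution. -/
def retYBE (S : YBE X) [Finite X] : YBE (Quotient S.retSetoid) where
  σ := Quotient.lift S.retPerm fun a b (h : S.σ a = S.σ b) => Equiv.ext fun q =>
    Quotient.inductionOn q fun z => by
      show Quotient.mk _ (S.σ a z) = Quotient.mk _ (S.σ b z)
      rw [h]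
  ybe := by
    rintro ⟨x⟩ ⟨y⟩
    apply Equiv.ext
    rintro ⟨z⟩
    show Quotient.mk _ (S.σ x (S.σ ((S.σ x)⁻¹ y) z))
        = Quotient.mk _ (S.σ y (S.σ ((S.σ y)⁻¹ x) z))
    have h2 : S.σ x (S.σ ((S.σ x)⁻¹ y) z) = S.σ y (S.σ ((S.σ y)⁻¹ x) z) := by
      have := congrArg (fun g : Equiv.Perm X => g z) (S.ybe x y)
      simpa using this
    rw [h2]

/-- The trivial solution. -/
def trivYBE (Z : Type v) : YBE Z := ⟨fun _ => 1, fun _ _ => rfl⟩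

/-- The shift permutation on `ULift (ZMod q)`. -/
def shiftPerm (q : ℕ) : Equiv.Perm (ULift.{u} (ZMod q)) where
  toFun z := ⟨z.down + 1⟩
  invFun z := ⟨z.down - 1⟩
  left_inv z := by cases z; simp
  right_inv z := by cases z; simp

/-- The shift (permutation) solution on `ULift (ZMod q)`. -/
def shiftYBE (q : ℕ) : YBE (ULift.{u} (ZMod q)) := ⟨fun _ => shiftPerm q, fun _ _ => rfl⟩

/-- The orbit setoid. -/
def orbSetoid (S : YBE X) : Setoid X :=
  ⟨fun a b => ∃ g ∈ S.permGroup, g a = b,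
   ⟨fun _ => ⟨1, one_mem _, rfl⟩,
    fun {a b} h => by
      obtain ⟨g, hg, e⟩ := h
      exact ⟨g⁻¹, inv_mem hg, by rw [← e, Equiv.Perm.inv_def, Equiv.symm_apply_apply]⟩,
    fun {a b c} h h' => by
      obtain ⟨g, hg, e⟩ := h
      obtain ⟨g', hg', e'⟩ := h'
      exact ⟨g' * g, mul_mem hg' hg, by rw [Equiv.Perm.mul_apply, e, e']⟩⟩⟩

private lemma indec (S : YBE X) (hs : S.IsSimple) (h2 : 2 < Nat.card X) :
    S.Indecomposable := by
  classical
  have hpos : 0 < Nat.card X := by omega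
  have hfin : Finite X := (Nat.card_pos_iff.mp hpos).2
  have hhom : S.IsHom (trivYBE (Quotient S.orbSetoid)) (Quotient.mk S.orbSetoid) := by
    intro a b
    show Quotient.mk _ (S.σ a b) = Quotient.mk _ b
    refine Quotient.sound ?_
    exact ⟨(S.σ a)⁻¹, inv_mem (Subgroup.subset_closure (Set.mem_range_self a)),
      Equiv.symm_apply_apply _ _⟩
  have hsurj : Function.Surjective (Quotient.mk S.orbSetoid) :=
    fun q => Quotient.inductionOn q fun z => ⟨z, rfl⟩
  rcases hs.2 _ (trivYBE _) _ hhom hsurj with hbij | hone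
  · exfalso
    have hid : ∀ a b : X, S.σ a b = b := by
      intro a b
      apply hbij.1
      exact Quotient.sound ⟨(S.σ a)⁻¹,
        inv_mem (Subgroup.subset_closure (Set.mem_range_self a)),
        Equiv.symm_apply_apply _ _⟩
    have hnt : Nontrivial X := Finite.one_lt_card_iff_nontrivial.mp (by omega)
    obtain ⟨a, b, hab⟩ := exists_pair_ne X
    set f₂ : X → ULift.{u} Bool := fun z => if z = a then ⟨true⟩ else ⟨false⟩ with hf₂
    have hhom₂ : S.IsHom (trivYBE (ULift.{u} Bool)) f₂ := by
      intro p q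
      show f₂ (S.σ p q) = f₂ q
      rw [hid]
    have hsurj₂ : Function.Surjective f₂ := by
      rintro ⟨c⟩
      cases c
      · exact ⟨b, by rw [hf₂]; exact if_neg (Ne.symm hab)⟩
      · exact ⟨a, by simp [hf₂]⟩
    rcases hs.2 _ (trivYBE (ULift.{u} Bool)) f₂ hhom₂ hsurj₂ with hb | h1
    · have := Nat.card_eq_of_bijective f₂ hb
      have hcb : Nat.card (ULift.{u} Bool) = 2 := by
        simp [Nat.card_eq_fintype_card]
      omega
    · have hcb : Nat.card (ULift.{u} Bool) = 2 := by
        simp [Nat.card_eq_fintype_card]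
      omega
  · intro x y
    have hsub : Subsingleton (Quotient S.orbSetoid) :=
      (Nat.card_eq_one_iff_unique.mp hone).1
    have h := Subsingleton.elim (Quotient.mk S.orbSetoid x) (Quotient.mk S.orbSetoid y)
    exact Quotient.exact h

end YBE

/-- A simple solution is indecomposable whenever `|X| > 2`, and
irretractable whenever `|X|` is not prime. -/
theorem statement19 {X : Type u} (S : YBE X) (hs : S.IsSimple) :
    (2 < Nat.card X → S.Indecomposable) ∧
    (¬ (Nat.card X).Prime → ∀ x y : X, x ≠ y → S.σ x ≠ S.σ y) := by
  classical
  have hpos : 0 < Nat.card X := by have := hs.1; omega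
  have hfin : Finite X := (Nat.card_pos_iff.mp hpos).2
  constructor
  · exact fun h2 => YBE.indec S hs h2
  · intro hnp x y hxy hσ
    have h2 : 2 < Nat.card X := by
      by_contra h
      have he : Nat.card X = 2 := by have := hs.1; omega
      exact hnp (he ▸ Nat.prime_two)
    -- Step 1: retract quotient forces all σ equal
    have hRhom : S.IsHom S.retYBE (Quotient.mk S.retSetoid) := fun a b => rfl
    have hRsurj : Function.Surjective (Quotient.mk S.retSetoid) :=
      fun q => Quotient.inductionOn q fun z => ⟨z, rfl⟩
    rcases hs.2 _ S.retYBE _ hRhom hRsurj with hbij | hone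
    · exact hxy (hbij.1 (Quotient.sound hσ))
    have hall : ∀ a b : X, S.σ a = S.σ b := by
      intro a b
      have hsub : Subsingleton (Quotient S.retSetoid) :=
        (Nat.card_eq_one_iff_unique.mp hone).1
      have h := Subsingleton.elim (Quotient.mk S.retSetoid a) (Quotient.mk S.retSetoid b)
      exact Quotient.exact h
    -- Step 2: permutation solution, all σ = σ0
    set σ0 := S.σ x with hσ0
    have hind := YBE.indec S hs h2
    have hzp : ∀ g ∈ S.permGroup, g ∈ Subgroup.zpowers σ0 := by
      intro g hg
      have hr : Set.range S.σ ⊆ {σ0} := by rintro _ ⟨a, rfl⟩; exact hall a x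
      have h := Subgroup.closure_mono hr hg
      rwa [← Subgroup.zpowers_eq_closure] at h
    have horb : ∀ z : X, ∃ m : ℕ, (σ0 ^ m) x = z := by
      intro z
      obtain ⟨g, hg, hgx⟩ := hind x z
      obtain ⟨k, hk⟩ := Subgroup.mem_zpowers_iff.mp (hzp g hg)
      have hd : (0 : ℤ) < (orderOf σ0 : ℤ) := by exact_mod_cast orderOf_pos σ0
      refine ⟨(k % (orderOf σ0 : ℤ)).toNat, ?_⟩
      have hnn : 0 ≤ k % (orderOf σ0 : ℤ) := Int.emod_nonneg k hd.ne'
      have hps : σ0 ^ ((k % (orderOf σ0 : ℤ)).toNat) = g := by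
        rw [← hk, ← zpow_natCast, Int.toNat_of_nonneg hnn, zpow_mod_orderOf]
      rw [hps, hgx]
    -- minimal period
    have hex : ∃ k : ℕ, 0 < k ∧ (σ0 ^ k) x = x :=
      ⟨orderOf σ0, orderOf_pos σ0, by rw [pow_orderOf_eq_one]; rfl⟩
    set r := Nat.find hex with hrdef
    obtain ⟨hrpos, hrfix⟩ := Nat.find_spec hex
    have hmin : ∀ k, 0 < k → k < r → (σ0 ^ k) x ≠ x := fun k hk1 hk2 he =>
      Nat.find_min hex hk2 ⟨hk1, he⟩
    have hq : ∀ q : ℕ, (σ0 ^ (r * q)) x = x := by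
      intro q
      induction q with
      | zero => simp
      | succ n ih => rw [Nat.mul_succ, pow_add, Equiv.Perm.mul_apply, hrfix, ih]
    have hred : ∀ m : ℕ, (σ0 ^ m) x = (σ0 ^ (m % r)) x := by
      intro m
      conv_lhs => rw [← Nat.mod_add_div m r]
      rw [pow_add, Equiv.Perm.mul_apply, hq]
    have hinj : ∀ i j, i < r → j < r → (σ0 ^ i) x = (σ0 ^ j) x → i = j := by
      intro i j hi hj hij
      rcases le_total j i with h | h
      · rcases Nat.eq_or_lt_of_le h with he | hlt
        · exact he.symm
        · exfalso
          have hfix : (σ0 ^ (i - j)) x = x := by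
            have h1 : (σ0 ^ j) ((σ0 ^ (i - j)) x) = (σ0 ^ j) x := by
              rw [← Equiv.Perm.mul_apply, ← pow_add, Nat.add_sub_cancel' h, hij]
            exact (σ0 ^ j).injective h1
          exact hmin (i - j) (by omega) (by omega) hfix
      · rcases Nat.eq_or_lt_of_le h with he | hlt
        · exact he
        · exfalso
          have hfix : (σ0 ^ (j - i)) x = x := by
            have h1 : (σ0 ^ i) ((σ0 ^ (j - i)) x) = (σ0 ^ i) x := by
              rw [← Equiv.Perm.mul_apply, ← pow_add, Nat.add_sub_cancel' h, hij]
            exact (σ0 ^ i).injective h1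
          exact hmin (j - i) (by omega) (by omega) hfix
    have hbijF : Function.Bijective (fun i : Fin r => (σ0 ^ (i : ℕ)) x) := by
      constructor
      · intro i j hij
        exact Fin.ext (hinj i j i.2 j.2 hij)
      · intro z
        obtain ⟨m, hm⟩ := horb z
        refine ⟨⟨m % r, Nat.mod_lt _ hrpos⟩, ?_⟩
        show (σ0 ^ (m % r)) x = z
        rw [← hred m]; exact hm
    have hcardr : r = Nat.card X := by
      have h := Nat.card_eq_of_bijective _ hbijF
      simpa using h
    -- the prime p
    have hn2 : 2 ≤ Nat.card X := hs.1
    have hp : (Nat.card X).minFac.Prime := Nat.minFac_prime (by omega)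
    have hpd : (Nat.card X).minFac ∣ Nat.card X := Nat.minFac_dvd _
    have hplt : (Nat.card X).minFac < Nat.card X := by
      rcases lt_or_eq_of_le (Nat.le_of_dvd (by omega) hpd) with h | h
      · exact h
      · exact absurd (h ▸ hp) hnp
    set p := (Nat.card X).minFac with hpdef
    haveI : NeZero p := ⟨hp.pos.ne'⟩
    have hch : ∀ z : X, (σ0 ^ (Classical.choose (horb z))) x = z :=
      fun z => Classical.choose_spec (horb z)
    set f : X → ULift.{u} (ZMod p) :=
      fun z => ⟨((Classical.choose (horb z) : ℕ) : ZMod p)⟩ with hfdef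
    have hC : ∀ i j : ℕ, (σ0 ^ i) x = (σ0 ^ j) x → ((i : ZMod p) = (j : ZMod p)) := by
      intro i j hij
      rw [hred i, hred j] at hij
      have h1 : i % r = j % r :=
        hinj _ _ (Nat.mod_lt _ hrpos) (Nat.mod_lt _ hrpos) hij
      have h2 : i ≡ j [MOD r] := h1
      have h3 : i ≡ j [MOD p] := h2.of_dvd (by rw [hcardr]; exact hpd)
      exact (ZMod.natCast_eq_natCast_iff _ _ _).mpr h3
    have hfhom : S.IsHom (YBE.shiftYBE.{u} p) f := by
      intro a b
      show (⟨((Classical.choose (horb (S.σ a b)) : ℕ) : ZMod p)⟩ : ULift.{u} (ZMod p))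
          = ⟨((Classical.choose (horb b) : ℕ) : ZMod p) + 1⟩
      have hab : S.σ a b = σ0 b := by rw [hall a x]
      have h1 : (σ0 ^ (Classical.choose (horb (S.σ a b)))) x = σ0 b := by
        rw [hch, hab]
      have h2 : (σ0 ^ (Classical.choose (horb b) + 1)) x = σ0 b := by
        rw [pow_succ', Equiv.Perm.mul_apply, hch]
      have h3 := hC _ _ (h1.trans h2.symm)
      rw [h3]
      push_cast
      rfl
    have hfsurj : Function.Surjective f := by
      rintro ⟨c⟩
      obtain ⟨m, hm⟩ := ZMod.natCast_zmod_surjective (n := p) c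
      refine ⟨(σ0 ^ m) x, ?_⟩
      have h3 := hC (Classical.choose (horb ((σ0 ^ m) x))) m (by rw [hch])
      show (⟨_⟩ : ULift.{u} (ZMod p)) = ⟨c⟩
      rw [h3, hm]
    rcases hs.2 _ (YBE.shiftYBE.{u} p) f hfhom hfsurj with hb | h1
    · have h := Nat.card_eq_of_bijective f hb
      have hcz : Nat.card (ULift.{u} (ZMod p)) = p := by
        rw [Nat.card_ulift, Nat.card_zmod]
      omega
    · have hcz : Nat.card (ULift.{u} (ZMod p)) = p := by
        rw [Nat.card_ulift, Nat.card_zmod]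
      have := hp.one_lt
      omega
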